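/- For any topological space X, let UX denote the set of ultrafilters on X with the topology generated by the sets A^# = {𝔞 ∈ UX : A ∈ 𝔞} for A ⊆ X open. Then for every open A ⊆ X, the basic open set A^# is a compact subset of UX; in particular UX is locally compact. -/
import Mathlib

open TopologicalSpace Filter Set

theorem stmt7 {X : Type*} [TopologicalSpace X]
    (τ : TopologicalSpace (Ultrafilter X))
    (hτ : τ = TopologicalSpace.generateFrom
      {S : Set (Ultrafilter X) | ∃ A : Set X, IsOpen A ∧ S = {𝔞 : Ultrafilter X | A ∈ 𝔞}}) :
    (∀ A : Set X, IsOpen A → @IsCompact (Ultrafilter X) τ {𝔞 : Ultrafilter X | A ∈ 𝔞}) ∧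
    @LocallyCompactSpace (Ultrafilter X) τ := by
  subst hτ
  letI τ : TopologicalSpace (Ultrafilter X) := TopologicalSpace.generateFrom
      {S : Set (Ultrafilter X) | ∃ A : Set X, IsOpen A ∧ S = {𝔞 : Ultrafilter X | A ∈ 𝔞}}
  -- membership in the Kowalsky sum
  have hmembind : ∀ (𝔛 : Ultrafilter (Ultrafilter X)) (B : Set X),
      B ∈ 𝔛.bind id ↔ {𝔞 : Ultrafilter X | B ∈ 𝔞} ∈ 𝔛 := by
    intro 𝔛 B
    change B ∈ Filter.bind (𝔛 : Filter (Ultrafilter X)) (fun x => (x : Filter X)) ↔ _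
    rw [Filter.mem_bind']
    rfl
  -- every ultrafilter on UX converges to its Kowalsky sum
  have hconv : ∀ 𝔛 : Ultrafilter (Ultrafilter X),
      (𝔛 : Filter (Ultrafilter X)) ≤ @nhds _ τ (𝔛.bind id) := by
    intro 𝔛
    rw [TopologicalSpace.nhds_generateFrom]
    refine le_iInf₂ fun S hS => ?_
    obtain ⟨hmem, A, _, rfl⟩ := hS
    exact Filter.le_principal_iff.2 ((hmembind 𝔛 A).1 hmem)
  have hcompact : ∀ A : Set X, IsOpen A →
      @IsCompact (Ultrafilter X) τ {𝔞 : Ultrafilter X | A ∈ 𝔞} := by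
    intro A _
    rw [isCompact_iff_ultrafilter_le_nhds]
    intro 𝔛 h𝔛
    refine ⟨𝔛.bind id, ?_, hconv 𝔛⟩
    exact (hmembind 𝔛 A).2 (Filter.le_principal_iff.1 h𝔛)
  refine ⟨hcompact, ?_⟩
  -- the subbasic sets form a topological basis
  have hbasis : @TopologicalSpace.IsTopologicalBasis (Ultrafilter X) τ
      {S : Set (Ultrafilter X) | ∃ A : Set X, IsOpen A ∧ S = {𝔞 : Ultrafilter X | A ∈ 𝔞}} := by
    refine ⟨?_, ?_, rfl⟩
    · rintro S1 ⟨A, hA, rfl⟩ S2 ⟨B, hB, rfl⟩ 𝔞 h𝔞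
      refine ⟨{𝔟 : Ultrafilter X | A ∩ B ∈ 𝔟}, ⟨A ∩ B, hA.inter hB, rfl⟩, ?_, ?_⟩
      · exact Filter.inter_mem h𝔞.1 h𝔞.2
      · intro 𝔟 h𝔟
        exact ⟨Filter.mem_of_superset h𝔟 inter_subset_left,
          Filter.mem_of_superset h𝔟 inter_subset_right⟩
    · refine Set.eq_univ_of_forall fun 𝔞 => ?_
      exact ⟨{𝔟 : Ultrafilter X | (univ : Set X) ∈ 𝔟}, ⟨univ, isOpen_univ, rfl⟩,
        Filter.univ_mem⟩
  constructor
  intro 𝔞 n hn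
  obtain ⟨S, hS, h𝔞S, hSn⟩ := hbasis.exists_subset_of_mem_open
    (mem_interior_iff_mem_nhds.2 hn) isOpen_interior
  obtain ⟨A, hA, rfl⟩ := hS
  exact ⟨_, hbasis.mem_nhds ⟨A, hA, rfl⟩ h𝔞S, hSn.trans interior_subset, hcompact A hA⟩
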